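/- Let n ≥ 0 and 1 ≤ k ≤ n+1, and in Euclidean space ℝ^{n+1} consider the corner region C_k = {x ∈ ℝ^{n+1} : xⱼ ≥ 0 for all j ≤ k} with boundary ∂C_k = {x ∈ C_k : xⱼ = 0 for some j ≤ k}. Let u ∈ ℝ^{n+1} satisfy uⱼ > 0 for all j ≤ k, and set m = min{uⱼ : 1 ≤ j ≤ k}. Then a point p ∈ ∂C_k satisfies ‖u − p‖ = dist(u, ∂C_k) if and only if there is some j ≤ k with uⱼ = m and p is obtained from u by replacing its j-th coordinate by 0. Consequently, u has more than one nearest point on ∂C_k if and only if there exist i ≠ j with i, j ≤ k and uᵢ = uⱼ = m. (This identifies the Blum medial axis of the corner model C_k — the locus of interior points with multiple closest boundary points — as the set {u : uᵢ = uⱼ ≤ u_ℓ for some i ≠ j ≤ k and all ℓ ≤ k}, the local structure described by the edge-corner normal form in Definition 3.3 and Theorem 3.2.) -/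

import Mathlib

/-- Identification of the nearest boundary points in the corner model `C_k`, and hence of
the Blum medial axis of the corner model (Definition 3.3 / Theorem 3.2): for `u` interior
with `m = min{uⱼ : j < k}`, the nearest points of `u` on `∂C_k` are exactly the points
obtained from `u` by replacing a minimizing coordinate by `0`; consequently `u` has more
than one nearest boundary point iff two of the first `k` coordinates are both equal to the
minimum `m`. -/
theorem corner_model_medial_axis (n k : ℕ) (hk1 : 1 ≤ k) (hk2 : k ≤ n + 1)
    (u : EuclideanSpace ℝ (Fin (n + 1)))
    (hu : ∀ j : Fin (n + 1), (j : ℕ) < k → 0 < u j)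
    (S : Set (EuclideanSpace ℝ (Fin (n + 1))))
    (hS : S = {p | (∀ j : Fin (n + 1), (j : ℕ) < k → 0 ≤ p j) ∧
        ∃ j : Fin (n + 1), (j : ℕ) < k ∧ p j = 0})
    (m : ℝ) (hm : m = sInf {r : ℝ | ∃ j : Fin (n + 1), (j : ℕ) < k ∧ r = u j}) :
    (∀ p ∈ S, (dist u p = Metric.infDist u S ↔
        ∃ j : Fin (n + 1), (j : ℕ) < k ∧ u j = m ∧ p j = 0 ∧
          ∀ i : Fin (n + 1), i ≠ j → p i = u i)) ∧
    ((∃ p ∈ S, ∃ q ∈ S, p ≠ q ∧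
        dist u p = Metric.infDist u S ∧ dist u q = Metric.infDist u S) ↔
      ∃ i j : Fin (n + 1), i ≠ j ∧ (i : ℕ) < k ∧ (j : ℕ) < k ∧ u i = m ∧ u j = m) := by
  subst hS
  set A : Set ℝ := {r : ℝ | ∃ j : Fin (n + 1), (j : ℕ) < k ∧ r = u j} with hA
  have hAfin : A.Finite := by
    have hsub : A ⊆ Set.range u := by rintro r ⟨j, _, rfl⟩; exact ⟨j, rfl⟩
    exact (Set.finite_range u).subset hsub
  have hAne : A.Nonempty := ⟨u ⟨0, by omega⟩, ⟨0, by omega⟩, show 0 < k by omega, rfl⟩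
  have hmA : m ∈ A := hm ▸ hAne.csInf_mem hAfin
  obtain ⟨j0, hj0k, hmj0⟩ := hmA
  have hmle : ∀ j : Fin (n + 1), (j : ℕ) < k → m ≤ u j := fun j hj =>
    hm ▸ csInf_le hAfin.bddBelow ⟨j, hj, rfl⟩
  have hmpos : 0 < m := by rw [hmj0]; exact hu j0 hj0k
  have hdist : ∀ p : EuclideanSpace ℝ (Fin (n + 1)),
      dist u p = Real.sqrt (∑ i, (u i - p i) ^ 2) := by
    intro p
    rw [EuclideanSpace.dist_eq]
    congr 1
    refine Finset.sum_congr rfl fun i _ => ?_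
    rw [Real.dist_eq, sq_abs]
  -- lower bound
  have hlb : ∀ p : EuclideanSpace ℝ (Fin (n + 1)), ∀ j : Fin (n + 1),
      (j : ℕ) < k → p j = 0 → m ≤ dist u p := by
    intro p j hj hpj
    rw [hdist]
    have h1 : (u j) ^ 2 ≤ ∑ i, (u i - p i) ^ 2 := by
      have := Finset.single_le_sum (f := fun i => (u i - p i) ^ 2)
        (fun i _ => sq_nonneg _) (Finset.mem_univ j)
      simpa [hpj] using this
    calc m ≤ u j := hmle j hj
      _ = Real.sqrt ((u j) ^ 2) := (Real.sqrt_sq (hu j hj).le).symm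
      _ ≤ _ := Real.sqrt_le_sqrt h1
  -- distance to update points
  have hqd : ∀ j : Fin (n + 1), (j : ℕ) < k →
      dist u (WithLp.toLp 2 (Function.update u.ofLp j (0 : ℝ))) = u j := by
    intro j hj
    rw [hdist]
    have hsum : ∑ i, (u i - WithLp.toLp 2 (Function.update u.ofLp j (0 : ℝ)) i) ^ 2 = (u j) ^ 2 := by
      rw [Finset.sum_eq_single j]
      · simp
      · intro i _ hij; simp [Function.update_of_ne hij]
      · simp
    rw [hsum, Real.sqrt_sq (hu j hj).le]
  have hqS : ∀ j : Fin (n + 1), (j : ℕ) < k →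
      WithLp.toLp 2 (Function.update u.ofLp j (0 : ℝ)) ∈ {p : EuclideanSpace ℝ (Fin (n + 1)) |
        (∀ j : Fin (n + 1), (j : ℕ) < k → 0 ≤ p j) ∧
        ∃ j : Fin (n + 1), (j : ℕ) < k ∧ p j = 0} := by
    intro j hj
    refine ⟨fun i hi => ?_, j, hj, by simp⟩
    by_cases hij : i = j
    · subst hij; simp
    · rw [PiLp.toLp_apply, Function.update_of_ne hij]; exact (hu i hi).le
  have hSne : ({p : EuclideanSpace ℝ (Fin (n + 1)) |
      (∀ j : Fin (n + 1), (j : ℕ) < k → 0 ≤ p j) ∧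
      ∃ j : Fin (n + 1), (j : ℕ) < k ∧ p j = 0} : Set _).Nonempty :=
    ⟨_, hqS j0 hj0k⟩
  have hinf : Metric.infDist u {p : EuclideanSpace ℝ (Fin (n + 1)) |
      (∀ j : Fin (n + 1), (j : ℕ) < k → 0 ≤ p j) ∧
      ∃ j : Fin (n + 1), (j : ℕ) < k ∧ p j = 0} = m := by
    apply le_antisymm
    · calc Metric.infDist u _ ≤ dist u (WithLp.toLp 2 (Function.update u.ofLp j0 (0 : ℝ))) :=
            Metric.infDist_le_dist_of_mem (hqS j0 hj0k)
        _ = u j0 := hqd j0 hj0k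
        _ = m := hmj0.symm
    · rw [Metric.infDist_eq_iInf]
      haveI := hSne.to_subtype
      apply le_ciInf
      rintro ⟨p, _, j, hj, hpj⟩
      exact hlb p j hj hpj
  rw [hinf]
  -- characterization of nearest points
  have hchar : ∀ p ∈ {p : EuclideanSpace ℝ (Fin (n + 1)) |
      (∀ j : Fin (n + 1), (j : ℕ) < k → 0 ≤ p j) ∧
      ∃ j : Fin (n + 1), (j : ℕ) < k ∧ p j = 0},
      (dist u p = m ↔
        ∃ j : Fin (n + 1), (j : ℕ) < k ∧ u j = m ∧ p j = 0 ∧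
          ∀ i : Fin (n + 1), i ≠ j → p i = u i) := by
    rintro p ⟨hp1, j, hj, hpj⟩
    constructor
    · intro hd
      have hsum : ∑ i, (u i - p i) ^ 2 = m ^ 2 := by
        have h0 : 0 ≤ ∑ i, (u i - p i) ^ 2 :=
          Finset.sum_nonneg fun i _ => sq_nonneg _
        have := hd
        rw [hdist] at this
        calc ∑ i, (u i - p i) ^ 2 = Real.sqrt (∑ i, (u i - p i) ^ 2) ^ 2 :=
              (Real.sq_sqrt h0).symm
          _ = m ^ 2 := by rw [this]
      have hterm : (u j) ^ 2 ≤ m ^ 2 := by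
        rw [← hsum]
        have := Finset.single_le_sum (f := fun i => (u i - p i) ^ 2)
          (fun i _ => sq_nonneg _) (Finset.mem_univ j)
        simpa [hpj] using this
      have hujm : u j = m := by
        have h1 : u j ≤ m := by
          calc u j = Real.sqrt ((u j) ^ 2) := (Real.sqrt_sq (hu j hj).le).symm
            _ ≤ Real.sqrt (m ^ 2) := Real.sqrt_le_sqrt hterm
            _ = m := Real.sqrt_sq hmpos.le
        exact le_antisymm h1 (hmle j hj)
      refine ⟨j, hj, hujm, hpj, ?_⟩
      have hrest : ∑ i ∈ Finset.univ.erase j, (u i - p i) ^ 2 = 0 := by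
        have h2 : (u j - p j) ^ 2 + ∑ i ∈ Finset.univ.erase j, (u i - p i) ^ 2
            = ∑ i, (u i - p i) ^ 2 :=
          Finset.add_sum_erase Finset.univ (fun i => (u i - p i) ^ 2) (Finset.mem_univ j)
        rw [hsum, hpj, sub_zero, hujm] at h2
        linarith
      intro i hij
      have := (Finset.sum_eq_zero_iff_of_nonneg
        (fun i _ => sq_nonneg (u i - p i))).mp hrest i
        (Finset.mem_erase.mpr ⟨hij, Finset.mem_univ i⟩)
      have hsub : u i - p i = 0 := by
        have := pow_eq_zero_iff (n := 2) (by norm_num) |>.mp this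
        exact this
      linarith [sub_eq_zero.mp hsub]
    · rintro ⟨j', hj', huj', hpj', hpi⟩
      have hpe : p = WithLp.toLp 2 (Function.update u.ofLp j' (0 : ℝ)) := by
        ext i
        by_cases hij : i = j'
        · subst hij; simpa using hpj'
        · change p i = Function.update u.ofLp j' (0 : ℝ) i
          rw [Function.update_of_ne hij]; exact hpi i hij
      rw [hpe, hqd j' hj', huj']
  refine ⟨hchar, ?_⟩
  constructor
  · rintro ⟨p, hp, q, hq, hpq, hdp, hdq⟩
    obtain ⟨jp, hjp, hujp, hpjp, hpi⟩ := (hchar p hp).mp hdp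
    obtain ⟨jq, hjq, hujq, hqjq, hqi⟩ := (hchar q hq).mp hdq
    refine ⟨jp, jq, ?_, hjp, hjq, hujp, hujq⟩
    rintro rfl
    apply hpq
    ext i
    by_cases hij : i = jp
    · subst hij; rw [hpjp, hqjq]
    · rw [hpi i hij, hqi i hij]
  · rintro ⟨i, j, hij, hik, hjk, hui, huj⟩
    refine ⟨WithLp.toLp 2 (Function.update u.ofLp i (0 : ℝ)), hqS i hik,
      WithLp.toLp 2 (Function.update u.ofLp j (0 : ℝ)), hqS j hjk, ?_, by rw [hqd i hik, hui],
      by rw [hqd j hjk, huj]⟩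
    intro h
    have : (WithLp.toLp 2 (Function.update u.ofLp i (0 : ℝ))) i =
        (WithLp.toLp 2 (Function.update u.ofLp j (0 : ℝ))) i := by rw [h]
    change Function.update u.ofLp i (0 : ℝ) i = Function.update u.ofLp j (0 : ℝ) i at this
    rw [Function.update_self, Function.update_of_ne hij] at this
    rw [← this] at hui
    exact absurd hui.symm hmpos.ne'
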